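/- Let X = R² where, conditional on b ~ Gamma(shape α, mean b₀), R² is noncentral chi-square as in the H-K model with noncentrality A². Suppose α > 1 and A ≥ 0. Then lim_{s→∞} s·M_X(s) = c, where c = (A/2)^{(α-1)/2} · ((α/b₀)^{(α+1)/2}/Γ(α)) · K_{α-1}(√(2Aα/b₀)) for A > 0, and c = α/(2b₀(α-1)) for A = 0. -/

import Mathlib

open Real MeasureTheory Set Filter

/-- Modified Bessel function of the second kind of order `a`, via the integral
representation `K_a(z) = (1/2)(z/2)^a ∫₀^∞ t^{-a-1} exp(-t - z²/(4t)) dt` (valid for `z > 0`). -/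
noncomputable def besselK (a z : ℝ) : ℝ :=
  (1 / 2) * (z / 2) ^ a * ∫ t in Ioi (0 : ℝ), t ^ (-a - 1) * Real.exp (-t - z ^ 2 / (4 * t))

/-- Asymptotic coefficient of the H-K MGF: with
`M(s) = ((α/b₀)^α/Γ(α)) ∫₀^∞ (b^{α-1}/(2bs+1)) exp(-As/(2bs+1) - αb/b₀) db`
(noncentrality `A = Ã²`), `α > 1` and `A ≥ 0`, one has `s·M(s) → c` as `s → ∞`, where
`c = (A/2)^{(α-1)/2} ((α/b₀)^{(α+1)/2}/Γ(α)) K_{α-1}(√(2Aα/b₀))` if `A > 0`, and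
`c = α/(2b₀(α-1))` if `A = 0`. -/
theorem stmt_7 (α A b₀ : ℝ) (hα : 1 < α) (hA : 0 ≤ A) (hb₀ : 0 < b₀) :
    Tendsto (fun s : ℝ => s *
        (((α / b₀) ^ α / Real.Gamma α) *
          ∫ b in Ioi (0 : ℝ),
            (b ^ (α - 1) / (2 * b * s + 1)) *
              Real.exp (-A * s / (2 * b * s + 1) - α * b / b₀)))
      atTop
      (nhds (if 0 < A then
          (A / 2) ^ ((α - 1) / 2) * ((α / b₀) ^ ((α + 1) / 2) / Real.Gamma α) *
            besselK (α - 1) (Real.sqrt (2 * A * α / b₀))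
        else α / (2 * b₀ * (α - 1)))) := by
  have hb0' : (0:ℝ) < α / b₀ := by positivity
  have hα1 : (0:ℝ) < α - 1 := by linarith
  set C : ℝ := (α / b₀) ^ α / Real.Gamma α with hC
  set litf : ℝ → ℝ := fun b => b ^ (α - 2) / 2 * Real.exp (-A / (2 * b) - α * b / b₀)
    with hlitf
  set F : ℝ → ℝ → ℝ := fun s b =>
    s * ((b ^ (α - 1) / (2 * b * s + 1)) *
      Real.exp (-A * s / (2 * b * s + 1) - α * b / b₀)) with hF
  have key : Tendsto (fun s => ∫ b in Ioi (0:ℝ), F s b) atTop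
      (nhds (∫ b in Ioi (0:ℝ), litf b)) := by
    apply tendsto_integral_filter_of_dominated_convergence
      (fun b => b ^ (α - 2) / 2 * Real.exp (-(α / b₀) * b))
    · filter_upwards [eventually_ge_atTop (0:ℝ)] with s hs
      apply ContinuousOn.aestronglyMeasurable _ measurableSet_Ioi
      have hden : ∀ x ∈ Ioi (0:ℝ), 2 * x * s + 1 ≠ 0 := by
        intro x hx
        have hx' : (0:ℝ) < x := hx
        positivity
      apply ContinuousOn.mul continuousOn_const
      apply ContinuousOn.mul
      · exact (continuousOn_id.rpow_const (fun x hx => Or.inl (ne_of_gt hx))).div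
          (by fun_prop) hden
      · exact Real.continuous_exp.comp_continuousOn
          ((continuousOn_const.div (by fun_prop) hden).sub (by fun_prop))
    · filter_upwards [eventually_ge_atTop (0:ℝ)] with s hs
      rw [ae_restrict_iff' measurableSet_Ioi]
      filter_upwards with b hb
      have hb' : (0:ℝ) < b := hb
      have hden : (0:ℝ) < 2 * b * s + 1 := by positivity
      have hF0 : 0 ≤ F s b := by
        apply mul_nonneg hs
        apply mul_nonneg (div_nonneg (rpow_nonneg hb'.le _) hden.le) (exp_pos _).le
      rw [Real.norm_eq_abs, abs_of_nonneg hF0]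
      have hfrac : s / (2 * b * s + 1) ≤ (2 * b)⁻¹ := by
        rw [div_le_iff₀ hden, inv_mul_eq_div, le_div_iff₀ (by positivity : (0:ℝ) < 2 * b)]
        nlinarith
      have hexp : Real.exp (-A * s / (2 * b * s + 1) - α * b / b₀) ≤
          Real.exp (-(α / b₀) * b) := by
        apply Real.exp_le_exp.2
        have h1 : 0 ≤ A * s / (2 * b * s + 1) := by positivity
        have h2 : -(α * b / b₀) = -(α / b₀) * b := by ring
        have : -A * s / (2 * b * s + 1) = -(A * s / (2 * b * s + 1)) := by ring
        rw [this]
        linarith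
      calc F s b = (b ^ (α - 1) * (s / (2 * b * s + 1))) *
              Real.exp (-A * s / (2 * b * s + 1) - α * b / b₀) := by rw [hF]; ring
        _ ≤ (b ^ (α - 1) * (2 * b)⁻¹) * Real.exp (-(α / b₀) * b) := by
            apply mul_le_mul _ hexp (exp_pos _).le (by positivity)
            exact mul_le_mul_of_nonneg_left hfrac (rpow_nonneg hb'.le _)
        _ = b ^ (α - 2) / 2 * Real.exp (-(α / b₀) * b) := by
            rw [show α - 1 = (α - 2) + 1 by ring, Real.rpow_add hb', Real.rpow_one]
            field_simp
    · have h := integrableOn_rpow_mul_exp_neg_mul_rpow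
        (show (-1:ℝ) < α - 2 by linarith) (zero_lt_one : (0:ℝ) < 1) hb0'
      have h2 : (fun x : ℝ => (1/2) * (x ^ (α - 2) * Real.exp (-(α / b₀) * x ^ (1:ℝ))))
          = fun b : ℝ => b ^ (α - 2) / 2 * Real.exp (-(α / b₀) * b) := by
        funext x; rw [Real.rpow_one]; ring
      exact h2 ▸ h.const_mul (1/2)
    · rw [ae_restrict_iff' measurableSet_Ioi]
      filter_upwards with b
      intro hb
      have hb' : (0:ℝ) < b := hb
      have hden : Tendsto (fun s : ℝ => s / (2 * b * s + 1)) atTop (nhds (2 * b)⁻¹) := by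
        have h1 : Tendsto (fun s : ℝ => (2 * b + s⁻¹)⁻¹) atTop (nhds (2 * b)⁻¹) := by
          have h2 := ((tendsto_const_nhds (x := 2 * b) (f := atTop)).add
            tendsto_inv_atTop_zero).inv₀ (by positivity : 2 * b + 0 ≠ 0)
          simpa using h2
        apply h1.congr'
        filter_upwards [eventually_gt_atTop (0:ℝ)] with s hs
        rw [eq_div_iff (by positivity : 2 * b * s + 1 ≠ 0), inv_mul_eq_div,
          div_eq_iff (by positivity : 2 * b + s⁻¹ ≠ 0)]
        field_simp
      have hg : Continuous (fun r : ℝ => b ^ (α - 1) * r * Real.exp (-(A * r) - α * b / b₀)) := by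
        continuity
      have h3 := (hg.tendsto ((2 * b)⁻¹)).comp hden
      have h4 : ∀ s : ℝ, b ^ (α - 1) * (s / (2 * b * s + 1)) *
          Real.exp (-(A * (s / (2 * b * s + 1))) - α * b / b₀) = F s b := by
        intro s
        simp only [hF]
        rw [show -A * s / (2 * b * s + 1) - α * b / b₀
          = -(A * (s / (2 * b * s + 1))) - α * b / b₀ by ring]
        ring
      have h5 : litf b = b ^ (α - 1) * (2 * b)⁻¹ *
          Real.exp (-(A * (2 * b)⁻¹) - α * b / b₀) := by
        simp only [hlitf]
        rw [show -(A * (2 * b)⁻¹) - α * b / b₀ = -A / (2 * b) - α * b / b₀ by ring,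
          show α - 1 = (α - 2) + 1 by ring, Real.rpow_add hb', Real.rpow_one]
        field_simp
      rw [h5]
      exact h3.congr h4
  have heq : (fun s : ℝ => s * (C * ∫ b in Ioi (0:ℝ),
      (b ^ (α - 1) / (2 * b * s + 1)) * Real.exp (-A * s / (2 * b * s + 1) - α * b / b₀)))
      = fun s => C * ∫ b in Ioi (0:ℝ), F s b := by
    funext s
    simp only [hF, MeasureTheory.integral_const_mul]
    ring
  rw [heq]
  have hJ : (∫ b in Ioi (0:ℝ), litf b)
      = (1/2) * ∫ b in Ioi (0:ℝ), b ^ (α - 2) * Real.exp (-A / (2 * b) - α * b / b₀) := by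
    rw [← MeasureTheory.integral_const_mul]
    exact setIntegral_congr_fun measurableSet_Ioi (fun b _ => by rw [hlitf]; ring)
  have hval : (if 0 < A then
          (A / 2) ^ ((α - 1) / 2) * ((α / b₀) ^ ((α + 1) / 2) / Real.Gamma α) *
            besselK (α - 1) (Real.sqrt (2 * A * α / b₀))
        else α / (2 * b₀ * (α - 1))) = C * ∫ b in Ioi (0:ℝ), litf b := by
    rw [hJ]
    by_cases hApos : 0 < A
    · rw [if_pos hApos]
      set z := Real.sqrt (2 * A * α / b₀) with hz
      have hz2 : z ^ 2 = 2 * A * α / b₀ := Real.sq_sqrt (by positivity)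
      have hA2 : (0:ℝ) < A / 2 := by linarith
      have hKrw : besselK (α - 1) z = (1/2) * (z/2) ^ (α - 1) *
          ∫ t in Ioi (0:ℝ), t ^ (-α) * Real.exp (-t - z ^ 2 / (4 * t)) := by
        rw [besselK, show -(α - 1) - 1 = -α by ring]
      have himg : (fun b : ℝ => A / (2 * b)) '' Ioi 0 = Ioi 0 := by
        ext t
        simp only [mem_image, mem_Ioi]
        constructor
        · rintro ⟨b, hb, rfl⟩; positivity
        · intro ht
          refine ⟨A / (2 * t), by positivity, ?_⟩
          rw [eq_comm, eq_div_iff (by positivity)]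
          field_simp
      have hderiv : ∀ x ∈ Ioi (0:ℝ), HasDerivWithinAt (fun b : ℝ => A / (2 * b))
          (-(A / (2 * x ^ 2))) (Ioi 0) x := by
        intro x hx
        have hx' : (0:ℝ) < x := hx
        have h := (hasDerivAt_inv (ne_of_gt hx')).const_mul (A / 2)
        have h2 : HasDerivAt (fun b : ℝ => A / (2 * b)) (-(A / (2 * x ^ 2))) x := by
          refine (h.congr_of_eventuallyEq (Eventually.of_forall fun y => by simp only; ring)).congr_deriv ?_
          ring
        exact h2.hasDerivWithinAt
      have hinj : InjOn (fun b : ℝ => A / (2 * b)) (Ioi 0) := by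
        intro a ha b hb h
        have ha' : (0:ℝ) < a := ha
        have hb' : (0:ℝ) < b := hb
        simp only at h
        rw [div_eq_div_iff (by positivity) (by positivity)] at h
        have h2 : (2:ℝ) * b = 2 * a :=
          mul_left_cancel₀ (ne_of_gt hApos) h
        linarith
      have hcov := integral_image_eq_integral_abs_deriv_smul measurableSet_Ioi hderiv hinj
        (fun t => t ^ (-α) * Real.exp (-t - z ^ 2 / (4 * t)))
      rw [himg] at hcov
      have hcov2 : (∫ t in Ioi (0:ℝ), t ^ (-α) * Real.exp (-t - z ^ 2 / (4 * t)))
          = (A/2) ^ (1 - α) *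
            ∫ b in Ioi (0:ℝ), b ^ (α - 2) * Real.exp (-A / (2 * b) - α * b / b₀) := by
        rw [hcov, ← MeasureTheory.integral_const_mul]
        apply setIntegral_congr_fun measurableSet_Ioi
        intro b hb
        have hb' : (0:ℝ) < b := hb
        simp only [smul_eq_mul]
        rw [abs_neg, abs_of_pos (by positivity : (0:ℝ) < A / (2 * b ^ 2))]
        have e1 : -(A / (2 * b)) - z ^ 2 / (4 * (A / (2 * b))) = -A / (2 * b) - α * b / b₀ := by
          rw [hz2]
          have hAne : A ≠ 0 := ne_of_gt hApos
          field_simp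
          ring
        rw [e1]
        have e2 : (A / (2 * b)) ^ (-α) = (A/2) ^ (-α) * b ^ α := by
          rw [show A / (2 * b) = (A/2) / b by ring, Real.div_rpow hA2.le hb'.le,
            Real.rpow_neg hb'.le]
          field_simp
        have e3 : (A/2) ^ ((1:ℝ) - α) = (A/2) * (A/2) ^ (-α) := by
          rw [show (1:ℝ) - α = 1 + -α by ring, Real.rpow_add hA2, Real.rpow_one]
        have e4 : b ^ (α - 2) = b ^ α / b ^ (2:ℕ) := by
          rw [show α - 2 = α - ((2:ℕ):ℝ) by norm_num, Real.rpow_sub hb', Real.rpow_natCast]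
        rw [e2, e3, e4]
        field_simp
      rw [hKrw, hcov2]
      have hw : Real.sqrt ((A/2) * (α/b₀)) = z / 2 := by
        rw [show (A/2) * (α/b₀) = (z/2)^2 by rw [div_pow, hz2]; ring]
        exact Real.sqrt_sq (by positivity)
      have hz24 : (z/2) ^ (α - 1) = (A/2) ^ ((α-1)/2) * (α/b₀) ^ ((α-1)/2) := by
        rw [← hw, Real.sqrt_eq_rpow, ← Real.rpow_mul (by positivity),
          show 1/2 * (α-1) = (α-1)/2 by ring, Real.mul_rpow hA2.le hb0'.le]
      rw [hz24]
      have eX : (A/2) ^ ((α-1)/2) * (A/2) ^ ((α-1)/2) * (A/2) ^ ((1:ℝ)-α) = 1 := by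
        rw [← Real.rpow_add hA2, ← Real.rpow_add hA2,
          show (α-1)/2 + (α-1)/2 + (1-α) = 0 by ring, Real.rpow_zero]
      have eY : (α/b₀) ^ ((α+1)/2) * (α/b₀) ^ ((α-1)/2) = (α/b₀) ^ α := by
        rw [← Real.rpow_add hb0', show (α+1)/2 + (α-1)/2 = α by ring]
      set J := ∫ b in Ioi (0:ℝ), b ^ (α-2) * Real.exp (-A / (2*b) - α*b/b₀) with hJdef
      calc (A/2)^((α-1)/2) * ((α/b₀)^((α+1)/2) / Real.Gamma α) *
            ((1/2) * ((A/2)^((α-1)/2) * (α/b₀)^((α-1)/2)) * ((A/2)^((1:ℝ)-α) * J))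
          = ((A/2)^((α-1)/2) * (A/2)^((α-1)/2) * (A/2)^((1:ℝ)-α)) *
            ((α/b₀)^((α+1)/2) * (α/b₀)^((α-1)/2)) / Real.Gamma α * ((1/2) * J) := by ring
        _ = C * ((1/2) * J) := by rw [eX, eY, hC]; ring
    · rw [if_neg hApos]
      have hA0 : A = 0 := le_antisymm (not_lt.1 hApos) hA
      subst hA0
      have hint_eq : (∫ b in Ioi (0:ℝ), b ^ (α-2) * Real.exp (-0 / (2*b) - α*b/b₀))
          = ∫ b in Ioi (0:ℝ), b ^ ((α-1)-1) * Real.exp (-((α/b₀)*b)) := by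
        apply setIntegral_congr_fun measurableSet_Ioi
        intro b hb
        beta_reduce
        rw [show α-2 = (α-1)-1 by ring, show -0/(2*b) - α*b/b₀ = -((α/b₀)*b) by ring]
      rw [hint_eq, integral_rpow_mul_exp_neg_mul_Ioi hα1 hb0']
      have hGamma : Real.Gamma α = (α-1) * Real.Gamma (α-1) := by
        have h := Real.Gamma_add_one (ne_of_gt hα1)
        rw [show α - 1 + 1 = α by ring] at h
        exact h
      have hpow : (α/b₀) ^ α * (1/(α/b₀)) ^ (α-1) = α/b₀ := by
        rw [one_div, Real.inv_rpow hb0'.le, ← Real.rpow_neg hb0'.le, ← Real.rpow_add hb0',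
          show α + -(α-1) = 1 by ring, Real.rpow_one]
      have hG1 : Real.Gamma (α-1) ≠ 0 := ne_of_gt (Real.Gamma_pos_of_pos hα1)
      have hcalc : C * ((1/2) * ((1/(α/b₀))^(α-1) * Real.Gamma (α-1)))
          = α / (2*b₀*(α-1)) := by
        calc C * ((1/2) * ((1/(α/b₀))^(α-1) * Real.Gamma (α-1)))
            = ((α/b₀)^α * (1/(α/b₀))^(α-1)) * (Real.Gamma (α-1) / Real.Gamma α) / 2 := by
              rw [hC]; field_simp
          _ = (α/b₀) * (Real.Gamma (α-1) / ((α-1) * Real.Gamma (α-1))) / 2 := by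
              rw [hpow, hGamma]
          _ = α / (2*b₀*(α-1)) := by
              have h1 : α - 1 ≠ 0 := ne_of_gt hα1
              rw [mul_comm (α-1) (Real.Gamma (α-1)), ← div_div, div_self hG1]
              field_simp
      rw [hcalc]
  rw [hval]
  exact key.const_mul C
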